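/- When all component variances are equal, σ_1 = … = σ_m = σ_0, and the means satisfy μ_1 < … < μ_m, the correlation curve of the exchangeable bivariate Gaussian mixture satisfies lim_{y→−∞} ρ(y) = ρ_1 √((1+γ)/(1+γρ_1²)) and lim_{y→+∞} ρ(y) = ρ_m √((1+γ)/(1+γρ_m²)), where γ = σ_μ²/σ_0² and σ_μ² = Σ_k p_k(μ_k − μ)². -/

import Mathlib

open scoped Real BigOperators
open Filter

/-- Univariate Gaussian density. -/
noncomputable def phi1 (μ σ y : ℝ) : ℝ :=
  (Real.sqrt (2 * Real.pi * σ ^ 2))⁻¹ * Real.exp (-(y - μ) ^ 2 / (2 * σ ^ 2))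

/-- Posterior component probability given Y₂ = y. -/
noncomputable def pstar (m : ℕ) (p μ σ : Fin m → ℝ) (k : Fin m) (y : ℝ) : ℝ :=
  p k * phi1 (μ k) (σ k) y / ∑ j, p j * phi1 (μ j) (σ j) y

/-- Componentwise conditional mean line. -/
noncomputable def muk (m : ℕ) (μ ρ : Fin m → ℝ) (k : Fin m) (y : ℝ) : ℝ :=
  μ k + ρ k * (y - μ k)

/-- Conditional mean of the mixture. -/
noncomputable def mucond (m : ℕ) (p μ σ ρ : Fin m → ℝ) (y : ℝ) : ℝ :=
  ∑ k, pstar m p μ σ k y * muk m μ ρ k y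

/-- Regression slope β(y) = μ'(y). -/
noncomputable def beta (m : ℕ) (p μ σ ρ : Fin m → ℝ) (y : ℝ) : ℝ :=
  ∑ k, pstar m p μ σ k y *
    (ρ k + (muk m μ ρ k y - mucond m p μ σ ρ y) * (-(y - μ k) / σ k ^ 2))

/-- Conditional variance σ²(y) of the mixture. -/
noncomputable def sig2cond (m : ℕ) (p μ σ ρ : Fin m → ℝ) (y : ℝ) : ℝ :=
  ∑ k, pstar m p μ σ k y *
    (σ k ^ 2 * (1 - ρ k ^ 2) + (muk m μ ρ k y - mucond m p μ σ ρ y) ^ 2)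

/-- The Bjerve–Doksum correlation curve of the mixture, with τ₂ equal to the
marginal standard deviation σ of the mixture. -/
noncomputable def corrCurve (m : ℕ) (p μ σ ρ : Fin m → ℝ) (y : ℝ) : ℝ :=
  let σglob := Real.sqrt (∑ k, p k * (σ k ^ 2 + (μ k - ∑ j, p j * μ j) ^ 2))
  σglob * beta m p μ σ ρ y /
    Real.sqrt ((σglob * beta m p μ σ ρ y) ^ 2 + sig2cond m p μ σ ρ y)


private lemma exp_lin_decay (a b : ℝ) (ha : a < 0) (n : ℕ) :
    Tendsto (fun y : ℝ => Real.exp (a * y + b) * y ^ n) atTop (nhds 0) := by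
  have h1 : Tendsto (fun x : ℝ => x ^ n * Real.exp (-x)) atTop (nhds 0) :=
    Real.tendsto_pow_mul_exp_neg_atTop_nhds_zero n
  have h2 : Tendsto (fun y : ℝ => -a * y) atTop atTop :=
    tendsto_id.const_mul_atTop (by linarith)
  have h4 := (h1.comp h2).const_mul (Real.exp b * ((-a)⁻¹) ^ n)
  rw [mul_zero] at h4
  refine h4.congr fun y => ?_
  have hane : (-a) ≠ 0 := ne_of_gt (by linarith)
  have hinv : ((-a)⁻¹) ^ n * (-a) ^ n = 1 := by
    rw [← mul_pow, inv_mul_cancel₀ hane, one_pow]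
  simp only [Function.comp, Real.exp_add]
  rw [show -(-a * y) = a * y by ring, mul_pow]
  linear_combination (Real.exp b * y ^ n * Real.exp (a * y)) * hinv

private lemma lin_exp_decay (a b c α β γ δ : ℝ) (ha : a < 0) :
    Tendsto (fun y : ℝ => c * Real.exp (a * y + b) * ((α * y + β) * (γ * y + δ)))
      atTop (nhds 0) := by
  have h0 := (exp_lin_decay a b ha 0).const_mul (c * (β * δ))
  have h1 := (exp_lin_decay a b ha 1).const_mul (c * (α * δ + β * γ))
  have h2 := (exp_lin_decay a b ha 2).const_mul (c * (α * γ))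
  have h := (h2.add h1).add h0
  simp only [mul_zero, add_zero] at h
  refine h.congr fun y => ?_
  ring


section Aux

variable (m : ℕ) (p μ : Fin (m + 1) → ℝ) (σ0 : ℝ) (L : Fin (m + 1))

/-- exponent slope -/
noncomputable def aa (k : Fin (m + 1)) : ℝ := (μ k - μ L) / σ0 ^ 2
/-- exponent intercept -/
noncomputable def bb (k : Fin (m + 1)) : ℝ := (μ L ^ 2 - μ k ^ 2) / (2 * σ0 ^ 2)
/-- unnormalized weight -/
noncomputable def tt (k : Fin (m + 1)) (y : ℝ) : ℝ :=
  p k * Real.exp (aa m μ σ0 L k * y + bb m μ σ0 L k)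
/-- normalizing sum -/
noncomputable def SS (y : ℝ) : ℝ := ∑ j, tt m p μ σ0 L j y

end Aux

section Lem

variable {m : ℕ} {p μ ρ : Fin (m + 1) → ℝ} {σ0 : ℝ} {L : Fin (m + 1)}
variable (hp : ∀ k, 0 < p k) (hσ0 : 0 < σ0)

private lemma phi1_pos (hσ0 : 0 < σ0) (ν y : ℝ) : 0 < phi1 ν σ0 y := by
  unfold phi1
  have h1 : 0 < Real.sqrt (2 * Real.pi * σ0 ^ 2) := by
    apply Real.sqrt_pos.mpr; have := Real.pi_pos; positivity
  positivity

private lemma key_phi (hσ0 : 0 < σ0) (k : Fin (m + 1)) (y : ℝ) :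
    phi1 (μ k) σ0 y = Real.exp (aa m μ σ0 L k * y + bb m μ σ0 L k) * phi1 (μ L) σ0 y := by
  unfold phi1 aa bb
  have h : Real.exp ((μ k - μ L) / σ0 ^ 2 * y + (μ L ^ 2 - μ k ^ 2) / (2 * σ0 ^ 2)) *
      Real.exp (-(y - μ L) ^ 2 / (2 * σ0 ^ 2)) = Real.exp (-(y - μ k) ^ 2 / (2 * σ0 ^ 2)) := by
    rw [← Real.exp_add]; congr 1; have h0 : σ0 ≠ 0 := hσ0.ne'; field_simp; ring
  calc (Real.sqrt (2 * Real.pi * σ0 ^ 2))⁻¹ * Real.exp (-(y - μ k) ^ 2 / (2 * σ0 ^ 2))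
      = (Real.sqrt (2 * Real.pi * σ0 ^ 2))⁻¹ *
        (Real.exp ((μ k - μ L) / σ0 ^ 2 * y + (μ L ^ 2 - μ k ^ 2) / (2 * σ0 ^ 2)) *
          Real.exp (-(y - μ L) ^ 2 / (2 * σ0 ^ 2))) := by rw [h]
    _ = _ := by ring

private lemma sum_phi (hσ0 : 0 < σ0) (y : ℝ) :
    ∑ j, p j * phi1 (μ j) σ0 y = SS m p μ σ0 L y * phi1 (μ L) σ0 y := by
  unfold SS tt
  rw [Finset.sum_mul]
  refine Finset.sum_congr rfl fun j _ => ?_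
  rw [key_phi (L := L) hσ0 j y]; ring

private lemma pstar_eq (hσ0 : 0 < σ0) (k : Fin (m + 1)) (y : ℝ) :
    pstar (m + 1) p μ (fun _ => σ0) k y = tt m p μ σ0 L k y / SS m p μ σ0 L y := by
  show p k * phi1 (μ k) σ0 y / (∑ j, p j * phi1 (μ j) σ0 y) = _
  rw [sum_phi (L := L) hσ0 y, key_phi (L := L) hσ0 k y, ← mul_assoc]
  rw [mul_div_mul_right _ _ (phi1_pos hσ0 (μ L) y).ne']
  rfl


private lemma tt_pos (hp : ∀ k, 0 < p k) (k : Fin (m + 1)) (y : ℝ) :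
    0 < tt m p μ σ0 L k y := by
  unfold tt; exact mul_pos (hp k) (Real.exp_pos _)

private lemma tt_L (y : ℝ) : tt m p μ σ0 L L y = p L := by
  unfold tt aa bb
  simp [sub_self]

private lemma SS_ge (hp : ∀ k, 0 < p k) (y : ℝ) : p L ≤ SS m p μ σ0 L y := by
  rw [← tt_L (m := m) (p := p) (μ := μ) (σ0 := σ0) (L := L) y]
  exact Finset.single_le_sum (fun j _ => (tt_pos hp j y).le) (Finset.mem_univ L)

private lemma SS_pos (hp : ∀ k, 0 < p k) (y : ℝ) : 0 < SS m p μ σ0 L y :=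
  lt_of_lt_of_le (hp L) (SS_ge hp y)

private lemma pstar_nonneg (hp : ∀ k, 0 < p k) (hσ0 : 0 < σ0) (k : Fin (m + 1)) (y : ℝ) :
    0 ≤ pstar (m + 1) p μ (fun _ => σ0) k y := by
  rw [pstar_eq (L := k) hσ0]
  exact le_of_lt (div_pos (tt_pos hp k y) (SS_pos (L := k) hp y))

private lemma pstar_le_one (hp : ∀ k, 0 < p k) (hσ0 : 0 < σ0) (k : Fin (m + 1)) (y : ℝ) :
    pstar (m + 1) p μ (fun _ => σ0) k y ≤ 1 := by
  rw [pstar_eq (L := k) hσ0]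
  rw [div_le_one (SS_pos (L := k) hp y)]
  exact Finset.single_le_sum (fun j _ => (tt_pos hp j y).le) (Finset.mem_univ k)

private lemma pstar_le_tt (hp : ∀ k, 0 < p k) (hσ0 : 0 < σ0) (k : Fin (m + 1)) (y : ℝ) :
    pstar (m + 1) p μ (fun _ => σ0) k y ≤ tt m p μ σ0 L k y / p L := by
  rw [pstar_eq (L := L) hσ0]
  exact div_le_div_of_nonneg_left (tt_pos hp k y).le (hp L) (SS_ge hp y)

/-- the workhorse: for a non-maximal component, the posterior weight times any
quadratic polynomial tends to 0. -/
private lemma pstar_decay (hp : ∀ k, 0 < p k) (hσ0 : 0 < σ0)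
    (hL : ∀ k, k ≠ L → μ k < μ L) (k : Fin (m + 1)) (hk : k ≠ L) (α β γ δ : ℝ) :
    Tendsto (fun y => pstar (m + 1) p μ (fun _ => σ0) k y * ((α * y + β) * (γ * y + δ)))
      atTop (nhds 0) := by
  have hak : aa m μ σ0 L k < 0 := by
    unfold aa
    apply div_neg_of_neg_of_pos (by linarith [hL k hk]) (by positivity)
  have hbig := lin_exp_decay (aa m μ σ0 L k) (bb m μ σ0 L k) (p k / p L) α β γ δ hak
  refine squeeze_zero_norm (a := fun y => ‖p k / p L *
      Real.exp (aa m μ σ0 L k * y + bb m μ σ0 L k) * ((α * y + β) * (γ * y + δ))‖)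
    (fun y => ?_) (by simpa only [norm_zero] using hbig.norm)
  have h1 : ‖pstar (m + 1) p μ (fun _ => σ0) k y * ((α * y + β) * (γ * y + δ))‖
      = pstar (m + 1) p μ (fun _ => σ0) k y * ‖(α * y + β) * (γ * y + δ)‖ := by
    rw [norm_mul, Real.norm_of_nonneg (pstar_nonneg hp hσ0 k y)]
  have h2 : tt m p μ σ0 L k y / p L = p k / p L * Real.exp (aa m μ σ0 L k * y + bb m μ σ0 L k) := by
    unfold tt; ring
  have h3 : ‖p k / p L * Real.exp (aa m μ σ0 L k * y + bb m μ σ0 L k) *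
      ((α * y + β) * (γ * y + δ))‖
      = p k / p L * Real.exp (aa m μ σ0 L k * y + bb m μ σ0 L k) *
        ‖(α * y + β) * (γ * y + δ)‖ := by
    rw [norm_mul]
    congr 1
    exact Real.norm_of_nonneg (by have := hp k; have := hp L; positivity)
  rw [h1, h3, ← h2]
  exact mul_le_mul_of_nonneg_right (pstar_le_tt hp hσ0 k y) (norm_nonneg _)

private lemma tt_tendsto (hp : ∀ k, 0 < p k) (hσ0 : 0 < σ0)
    (hL : ∀ k, k ≠ L → μ k < μ L) (k : Fin (m + 1)) :
    Tendsto (tt m p μ σ0 L k) atTop (nhds (if k = L then p L else 0)) := by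
  by_cases hk : k = L
  · subst hk
    simp only [eq_self_iff_true, if_true]
    exact tendsto_const_nhds.congr fun y => (tt_L y).symm
  · simp only [if_neg hk]
    have hak : aa m μ σ0 L k < 0 := by
      unfold aa
      apply div_neg_of_neg_of_pos (by linarith [hL k hk]) (by positivity)
    have := lin_exp_decay (aa m μ σ0 L k) (bb m μ σ0 L k) (p k) 0 1 0 1 hak
    refine this.congr fun y => ?_
    unfold tt; ring

private lemma SS_tendsto (hp : ∀ k, 0 < p k) (hσ0 : 0 < σ0)
    (hL : ∀ k, k ≠ L → μ k < μ L) :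
    Tendsto (SS m p μ σ0 L) atTop (nhds (p L)) := by
  have h := tendsto_finset_sum Finset.univ
    (fun k (_ : k ∈ Finset.univ) => tt_tendsto (L := L) hp hσ0 hL k)
  exact (by simpa [Finset.sum_ite_eq'] using h :
    Tendsto (fun b => ∑ c, tt m p μ σ0 L c b) atTop (nhds (p L)))

private lemma pstar_tendsto (hp : ∀ k, 0 < p k) (hσ0 : 0 < σ0)
    (hL : ∀ k, k ≠ L → μ k < μ L) (k : Fin (m + 1)) :
    Tendsto (pstar (m + 1) p μ (fun _ => σ0) k) atTop
      (nhds (if k = L then 1 else 0)) := by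
  have h := (tt_tendsto (L := L) hp hσ0 hL k).div (SS_tendsto (L := L) hp hσ0 hL) (hp L).ne'
  have h2 : (if k = L then p L else 0) / p L = if k = L then 1 else 0 := by
    by_cases hk : k = L <;> simp [hk, div_self (hp L).ne']
  rw [h2] at h
  exact h.congr fun y => (pstar_eq (L := L) hσ0 k y).symm

private lemma pstar_sum_one (hp : ∀ k, 0 < p k) (hσ0 : 0 < σ0) (y : ℝ) :
    ∑ k, pstar (m + 1) p μ (fun _ => σ0) k y = 1 := by
  unfold pstar
  rw [← Finset.sum_div, div_self]
  exact ne_of_gt (Finset.sum_pos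
    (fun j _ => mul_pos (hp j) (phi1_pos hσ0 (μ j) y)) Finset.univ_nonempty)

private lemma mucond_sub (hp : ∀ k, 0 < p k) (hσ0 : 0 < σ0) (y : ℝ) :
    mucond (m + 1) p μ (fun _ => σ0) ρ y - muk (m + 1) μ ρ L y
      = ∑ k, pstar (m + 1) p μ (fun _ => σ0) k y *
          (muk (m + 1) μ ρ k y - muk (m + 1) μ ρ L y) := by
  have h1 := pstar_sum_one (p := p) (μ := μ) hp hσ0 y
  simp only [mucond, mul_sub, Finset.sum_sub_distrib, ← Finset.sum_mul, h1, one_mul]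

private lemma B_decay (hp : ∀ k, 0 < p k) (hσ0 : 0 < σ0)
    (hL : ∀ k, k ≠ L → μ k < μ L) (γ δ : ℝ) :
    Tendsto (fun y => (mucond (m + 1) p μ (fun _ => σ0) ρ y - muk (m + 1) μ ρ L y)
        * (γ * y + δ)) atTop (nhds 0) := by
  have hterm : ∀ k : Fin (m + 1), Tendsto (fun y =>
      pstar (m + 1) p μ (fun _ => σ0) k y *
        ((muk (m + 1) μ ρ k y - muk (m + 1) μ ρ L y) * (γ * y + δ))) atTop (nhds 0) := by
    intro k
    by_cases hk : k = L
    · subst hk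
      refine tendsto_const_nhds.congr fun y => ?_
      simp
    · refine (pstar_decay hp hσ0 hL k hk (ρ k - ρ L)
        (μ k - ρ k * μ k - (μ L - ρ L * μ L)) γ δ).congr fun y => ?_
      simp only [muk]; ring
  have h := tendsto_finset_sum Finset.univ (fun k (_ : k ∈ Finset.univ) => hterm k)
  rw [Finset.sum_const_zero] at h
  refine h.congr fun y => ?_
  rw [mucond_sub (L := L) hp hσ0 y, Finset.sum_mul]
  exact Finset.sum_congr rfl fun k _ => (mul_assoc _ _ _).symm

private lemma B_decay0 (hp : ∀ k, 0 < p k) (hσ0 : 0 < σ0)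
    (hL : ∀ k, k ≠ L → μ k < μ L) :
    Tendsto (fun y => mucond (m + 1) p μ (fun _ => σ0) ρ y - muk (m + 1) μ ρ L y)
      atTop (nhds 0) := by
  refine (B_decay (L := L) (ρ := ρ) hp hσ0 hL 0 1).congr fun y => ?_
  ring

/-- auxiliary: pstar times (something tending to zero) tends to zero. -/
private lemma pstar_bdd_mul (hp : ∀ k, 0 < p k) (hσ0 : 0 < σ0) (k : Fin (m + 1))
    {X : ℝ → ℝ} (hX : Tendsto X atTop (nhds 0)) :
    Tendsto (fun y => pstar (m + 1) p μ (fun _ => σ0) k y * X y) atTop (nhds 0) := by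
  refine squeeze_zero_norm (a := fun y => ‖X y‖) (fun y => ?_)
    (by simpa only [norm_zero] using hX.norm)
  rw [norm_mul]
  have h1 : ‖pstar (m + 1) p μ (fun _ => σ0) k y‖ ≤ 1 := by
    rw [Real.norm_of_nonneg (pstar_nonneg hp hσ0 k y)]
    exact pstar_le_one hp hσ0 k y
  calc ‖pstar (m + 1) p μ (fun _ => σ0) k y‖ * ‖X y‖ ≤ 1 * ‖X y‖ :=
        mul_le_mul_of_nonneg_right h1 (norm_nonneg _)
    _ = ‖X y‖ := one_mul _

private lemma beta_tendsto (hp : ∀ k, 0 < p k) (hσ0 : 0 < σ0)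
    (hL : ∀ k, k ≠ L → μ k < μ L) :
    Tendsto (beta (m + 1) p μ (fun _ => σ0) ρ) atTop (nhds (ρ L)) := by
  have hterm : ∀ k : Fin (m + 1), Tendsto (fun y =>
      pstar (m + 1) p μ (fun _ => σ0) k y *
        (ρ k + (muk (m + 1) μ ρ k y - mucond (m + 1) p μ (fun _ => σ0) ρ y) *
          (-(y - μ k) / σ0 ^ 2))) atTop (nhds (if k = L then ρ L else 0)) := by
    intro k
    by_cases hk : k = L
    · subst hk
      simp only [eq_self_iff_true, if_true]
      have hps := pstar_tendsto (L := k) hp hσ0 hL k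
      simp only [eq_self_iff_true, if_true] at hps
      have h2 : Tendsto (fun y => pstar (m + 1) p μ (fun _ => σ0) k y *
          ((mucond (m + 1) p μ (fun _ => σ0) ρ y - muk (m + 1) μ ρ k y) *
            ((1 / σ0 ^ 2) * y + (-(μ k) / σ0 ^ 2)))) atTop (nhds 0) :=
        pstar_bdd_mul hp hσ0 k (B_decay (L := k) hp hσ0 hL (1 / σ0 ^ 2) (-(μ k) / σ0 ^ 2))
      have h := (hps.mul_const (ρ k)).add h2
      rw [add_zero, one_mul] at h
      refine h.congr fun y => ?_
      have hσ0' : σ0 ≠ 0 := hσ0.ne'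
      simp only [muk]
      field_simp
      ring
    · simp only [if_neg hk]
      have h1 := pstar_decay hp hσ0 hL k hk 0 (ρ k) 0 1
      have h2 := pstar_decay hp hσ0 hL k hk (ρ k - ρ L)
        (μ k - ρ k * μ k - (μ L - ρ L * μ L)) (-(1 / σ0 ^ 2)) (μ k / σ0 ^ 2)
      have h3 : Tendsto (fun y => pstar (m + 1) p μ (fun _ => σ0) k y *
          ((mucond (m + 1) p μ (fun _ => σ0) ρ y - muk (m + 1) μ ρ L y) *
            ((-(1 / σ0 ^ 2)) * y + μ k / σ0 ^ 2))) atTop (nhds 0) :=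
        pstar_bdd_mul hp hσ0 k (B_decay (L := L) hp hσ0 hL (-(1 / σ0 ^ 2)) (μ k / σ0 ^ 2))
      have h := (h1.add h2).sub h3
      rw [add_zero, sub_zero] at h
      refine h.congr fun y => ?_
      have hσ0' : σ0 ≠ 0 := hσ0.ne'
      simp only [muk]
      field_simp
      ring
  have h := tendsto_finset_sum Finset.univ (fun k (_ : k ∈ Finset.univ) => hterm k)
  rw [Finset.sum_ite_eq' Finset.univ L (fun _ => ρ L), if_pos (Finset.mem_univ L)] at h
  exact h.congr fun y => rfl

private lemma sig2_tendsto (hp : ∀ k, 0 < p k) (hσ0 : 0 < σ0)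
    (hL : ∀ k, k ≠ L → μ k < μ L) :
    Tendsto (sig2cond (m + 1) p μ (fun _ => σ0) ρ) atTop
      (nhds (σ0 ^ 2 * (1 - ρ L ^ 2))) := by
  have hB0 := B_decay0 (L := L) (ρ := ρ) hp hσ0 hL
  have hterm : ∀ k : Fin (m + 1), Tendsto (fun y =>
      pstar (m + 1) p μ (fun _ => σ0) k y *
        (σ0 ^ 2 * (1 - ρ k ^ 2) +
          (muk (m + 1) μ ρ k y - mucond (m + 1) p μ (fun _ => σ0) ρ y) ^ 2))
      atTop (nhds (if k = L then σ0 ^ 2 * (1 - ρ L ^ 2) else 0)) := by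
    intro k
    by_cases hk : k = L
    · subst hk
      simp only [eq_self_iff_true, if_true]
      have hps := pstar_tendsto (L := k) hp hσ0 hL k
      simp only [eq_self_iff_true, if_true] at hps
      have hsq := hB0.mul hB0
      rw [mul_zero] at hsq
      have h := hps.mul ((tendsto_const_nhds (x := σ0 ^ 2 * (1 - ρ k ^ 2))).add hsq)
      rw [one_mul, add_zero] at h
      refine h.congr fun y => ?_
      ring
    · simp only [if_neg hk]
      have q1 := pstar_decay hp hσ0 hL k hk 0 (σ0 ^ 2 * (1 - ρ k ^ 2)) 0 1
      have q2 := pstar_decay hp hσ0 hL k hk (ρ k - ρ L)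
        (μ k - ρ k * μ k - (μ L - ρ L * μ L)) (ρ k - ρ L)
        (μ k - ρ k * μ k - (μ L - ρ L * μ L))
      have q3 := (pstar_decay hp hσ0 hL k hk (ρ k - ρ L)
        (μ k - ρ k * μ k - (μ L - ρ L * μ L)) 0 1).mul hB0
      rw [mul_zero] at q3
      have q4 : Tendsto (fun y => pstar (m + 1) p μ (fun _ => σ0) k y *
          ((mucond (m + 1) p μ (fun _ => σ0) ρ y - muk (m + 1) μ ρ L y) *
            (mucond (m + 1) p μ (fun _ => σ0) ρ y - muk (m + 1) μ ρ L y)))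
          atTop (nhds 0) := by
        have := hB0.mul hB0
        rw [mul_zero] at this
        exact pstar_bdd_mul hp hσ0 k this
      have h := ((q1.add q2).add (q3.const_mul (-2))).add q4
      rw [add_zero, mul_zero, add_zero, add_zero] at h
      refine h.congr fun y => ?_
      simp only [muk]
      ring
  have h := tendsto_finset_sum Finset.univ (fun k (_ : k ∈ Finset.univ) => hterm k)
  rw [Finset.sum_ite_eq' Finset.univ L (fun _ => σ0 ^ 2 * (1 - ρ L ^ 2)),
    if_pos (Finset.mem_univ L)] at h
  exact h.congr fun y => rfl

end Lem


private lemma final_alg (σ0 V r : ℝ) (hσ0 : 0 < σ0) (hV : 0 ≤ V) (hr : r ^ 2 < 1) :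
    Real.sqrt (σ0 ^ 2 + V) * r /
      Real.sqrt ((Real.sqrt (σ0 ^ 2 + V) * r) ^ 2 + σ0 ^ 2 * (1 - r ^ 2))
      = r * Real.sqrt ((1 + V / σ0 ^ 2) / (1 + V / σ0 ^ 2 * r ^ 2)) := by
  have h2 : (0 : ℝ) < σ0 ^ 2 := by positivity
  have hg0 : 0 ≤ V / σ0 ^ 2 := by positivity
  have hs : Real.sqrt (σ0 ^ 2 + V) ^ 2 = σ0 ^ 2 + V := Real.sq_sqrt (by positivity)
  have e1 : σ0 ^ 2 + V = σ0 ^ 2 * (1 + V / σ0 ^ 2) := by field_simp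
  have e2 : (Real.sqrt (σ0 ^ 2 + V) * r) ^ 2 + σ0 ^ 2 * (1 - r ^ 2)
      = σ0 ^ 2 * (1 + V / σ0 ^ 2 * r ^ 2) := by
    rw [mul_pow, hs]; field_simp; ring
  rw [e2]
  rw [show Real.sqrt (σ0 ^ 2 + V) = σ0 * Real.sqrt (1 + V / σ0 ^ 2) by
    rw [e1, Real.sqrt_mul h2.le, Real.sqrt_sq hσ0.le]]
  rw [Real.sqrt_mul h2.le, Real.sqrt_sq hσ0.le, Real.sqrt_div (by linarith)]
  have hd : 0 < Real.sqrt (1 + V / σ0 ^ 2 * r ^ 2) := by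
    apply Real.sqrt_pos.mpr; nlinarith
  field_simp

private lemma aux_top {m : ℕ} (p μ ρ : Fin (m + 1) → ℝ) (σ0 : ℝ)
    (hp : ∀ k, 0 < p k) (hpsum : ∑ k, p k = 1) (hσ0 : 0 < σ0)
    (hρ : ∀ k, ρ k ∈ Set.Ioo (-1 : ℝ) 1)
    (L : Fin (m + 1)) (hL : ∀ k, k ≠ L → μ k < μ L) :
    Tendsto (corrCurve (m + 1) p μ (fun _ => σ0) ρ) atTop
      (nhds (ρ L * Real.sqrt
        ((1 + (∑ k, p k * (μ k - ∑ j, p j * μ j) ^ 2) / σ0 ^ 2) /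
          (1 + (∑ k, p k * (μ k - ∑ j, p j * μ j) ^ 2) / σ0 ^ 2 * ρ L ^ 2)))) := by
  have hVnn : 0 ≤ ∑ k, p k * (μ k - ∑ j, p j * μ j) ^ 2 :=
    Finset.sum_nonneg fun k _ => mul_nonneg (hp k).le (sq_nonneg _)
  have hρL2 : ρ L ^ 2 < 1 := by
    rcases hρ L with ⟨ha, hb⟩; nlinarith
  have hglob : ∑ k, p k * ((fun _ : Fin (m + 1) => σ0) k ^ 2 + (μ k - ∑ j, p j * μ j) ^ 2)
      = σ0 ^ 2 + ∑ k, p k * (μ k - ∑ j, p j * μ j) ^ 2 := by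
    simp only [mul_add, Finset.sum_add_distrib]
    congr 1
    rw [← Finset.sum_mul, hpsum, one_mul]
  have hb := beta_tendsto (L := L) (ρ := ρ) hp hσ0 hL
  have hs := sig2_tendsto (L := L) (ρ := ρ) hp hσ0 hL
  set V := ∑ k, p k * (μ k - ∑ j, p j * μ j) ^ 2 with hVdef
  set σg := Real.sqrt (σ0 ^ 2 + V) with hσg
  have h1 : Tendsto (fun y => σg * beta (m + 1) p μ (fun _ => σ0) ρ y) atTop
      (nhds (σg * ρ L)) := hb.const_mul σg
  have h2 : Tendsto (fun y => (σg * beta (m + 1) p μ (fun _ => σ0) ρ y) ^ 2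
      + sig2cond (m + 1) p μ (fun _ => σ0) ρ y) atTop
      (nhds ((σg * ρ L) ^ 2 + σ0 ^ 2 * (1 - ρ L ^ 2))) := (h1.pow 2).add hs
  have hpos : 0 < (σg * ρ L) ^ 2 + σ0 ^ 2 * (1 - ρ L ^ 2) := by
    have hx : 0 < σ0 ^ 2 * (1 - ρ L ^ 2) :=
      mul_pos (by positivity) (by linarith)
    nlinarith [sq_nonneg (σg * ρ L)]
  have h3 := h2.sqrt
  have h4 := h1.div h3 (Real.sqrt_pos.mpr hpos).ne'
  have hfun : ∀ y, corrCurve (m + 1) p μ (fun _ => σ0) ρ y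
      = σg * beta (m + 1) p μ (fun _ => σ0) ρ y /
        Real.sqrt ((σg * beta (m + 1) p μ (fun _ => σ0) ρ y) ^ 2
          + sig2cond (m + 1) p μ (fun _ => σ0) ρ y) := by
    intro y
    simp only [corrCurve]
    rw [hglob]
  have h5 := h4.congr fun y => (hfun y).symm
  rwa [show σg * ρ L / Real.sqrt ((σg * ρ L) ^ 2 + σ0 ^ 2 * (1 - ρ L ^ 2))
      = ρ L * Real.sqrt ((1 + V / σ0 ^ 2) / (1 + V / σ0 ^ 2 * ρ L ^ 2)) from by
    rw [hσg]; exact final_alg σ0 V (ρ L) hσ0 hVnn hρL2] at h5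

private lemma phi1_neg (ν σ y : ℝ) : phi1 ν σ (-y) = phi1 (-ν) σ y := by
  unfold phi1
  rw [show (-y - ν) ^ 2 = (y - -ν) ^ 2 by ring]

private lemma pstar_neg (m : ℕ) (p μ σ : Fin m → ℝ) (k : Fin m) (y : ℝ) :
    pstar m p μ σ k (-y) = pstar m p (fun j => -μ j) σ k y := by
  simp only [pstar, phi1_neg]

private lemma muk_neg (m : ℕ) (μ ρ : Fin m → ℝ) (k : Fin m) (y : ℝ) :
    muk m μ ρ k (-y) = -muk m (fun j => -μ j) ρ k y := by
  simp only [muk]; ring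

private lemma mucond_neg (m : ℕ) (p μ σ ρ : Fin m → ℝ) (y : ℝ) :
    mucond m p μ σ ρ (-y) = -mucond m p (fun j => -μ j) σ ρ y := by
  simp only [mucond, pstar_neg, muk_neg, mul_neg, Finset.sum_neg_distrib]

private lemma beta_neg (m : ℕ) (p μ σ ρ : Fin m → ℝ) (y : ℝ) :
    beta m p μ σ ρ (-y) = beta m p (fun j => -μ j) σ ρ y := by
  simp only [beta, pstar_neg, muk_neg, mucond_neg]
  refine Finset.sum_congr rfl fun k _ => ?_
  ring

private lemma sig2cond_neg (m : ℕ) (p μ σ ρ : Fin m → ℝ) (y : ℝ) :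
    sig2cond m p μ σ ρ (-y) = sig2cond m p (fun j => -μ j) σ ρ y := by
  simp only [sig2cond, pstar_neg, muk_neg, mucond_neg]
  refine Finset.sum_congr rfl fun k _ => ?_
  ring

private lemma corrCurve_neg (m : ℕ) (p μ σ ρ : Fin m → ℝ) (y : ℝ) :
    corrCurve m p μ σ ρ (-y) = corrCurve m p (fun j => -μ j) σ ρ y := by
  have hg : ∑ k, p k * (σ k ^ 2 + ((fun j => -μ j) k - ∑ j, p j * (fun j => -μ j) j) ^ 2)
      = ∑ k, p k * (σ k ^ 2 + (μ k - ∑ j, p j * μ j) ^ 2) := by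
    have : ∑ j, p j * -μ j = -∑ j, p j * μ j := by
      simp [mul_neg, Finset.sum_neg_distrib]
    refine Finset.sum_congr rfl fun k _ => ?_
    simp only [this]; ring
  simp only [corrCurve, beta_neg, sig2cond_neg, hg]

/-- Equal component variances σ₀ and strictly increasing means: the correlation curve
tends to ρ₁√((1+γ)/(1+γρ₁²)) at -∞ and to ρ_m√((1+γ)/(1+γρ_m²)) at +∞,
where γ = σ_μ²/σ₀² and σ_μ² = Σ_k p_k (μ_k − μ)². -/
theorem correlation_curve_limits_equal_variances
    (m : ℕ) (p μ ρ : Fin (m + 1) → ℝ) (σ0 : ℝ)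
    (hp : ∀ k, 0 < p k) (hpsum : ∑ k, p k = 1) (hσ0 : 0 < σ0)
    (hρ : ∀ k, ρ k ∈ Set.Ioo (-1 : ℝ) 1)
    (hμ : StrictMono μ) :
    Tendsto (corrCurve (m + 1) p μ (fun _ => σ0) ρ) atBot
      (nhds (ρ 0 * Real.sqrt
        ((1 + (∑ k, p k * (μ k - ∑ j, p j * μ j) ^ 2) / σ0 ^ 2) /
          (1 + (∑ k, p k * (μ k - ∑ j, p j * μ j) ^ 2) / σ0 ^ 2 * ρ 0 ^ 2)))) ∧
    Tendsto (corrCurve (m + 1) p μ (fun _ => σ0) ρ) atTop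
      (nhds (ρ (Fin.last m) * Real.sqrt
        ((1 + (∑ k, p k * (μ k - ∑ j, p j * μ j) ^ 2) / σ0 ^ 2) /
          (1 + (∑ k, p k * (μ k - ∑ j, p j * μ j) ^ 2) / σ0 ^ 2 *
            ρ (Fin.last m) ^ 2)))) := by
  constructor
  · have h := aux_top p (fun j => -μ j) ρ σ0 hp hpsum hσ0 hρ 0
      (fun k hk => neg_lt_neg (hμ (Fin.pos_of_ne_zero hk)))
    have hVeq : ∑ k, p k * ((fun j => -μ j) k - ∑ j, p j * (fun j => -μ j) j) ^ 2
        = ∑ k, p k * (μ k - ∑ j, p j * μ j) ^ 2 := by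
      have hinner : ∑ j, p j * -μ j = -∑ j, p j * μ j := by
        simp [mul_neg, Finset.sum_neg_distrib]
      refine Finset.sum_congr rfl fun k _ => ?_
      simp only [hinner]
      ring
    rw [hVeq] at h
    have h2 : Tendsto (fun y => corrCurve (m + 1) p μ (fun _ => σ0) ρ (-y)) atTop
        (nhds (ρ 0 * Real.sqrt
          ((1 + (∑ k, p k * (μ k - ∑ j, p j * μ j) ^ 2) / σ0 ^ 2) /
            (1 + (∑ k, p k * (μ k - ∑ j, p j * μ j) ^ 2) / σ0 ^ 2 * ρ 0 ^ 2)))) :=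
      h.congr fun y => (corrCurve_neg (m + 1) p μ (fun _ => σ0) ρ y).symm
    have h3 := h2.comp tendsto_neg_atBot_atTop
    refine h3.congr fun y => ?_
    show corrCurve (m + 1) p μ (fun _ => σ0) ρ (- -y) = _
    rw [neg_neg]
  · exact aux_top p μ ρ σ0 hp hpsum hσ0 hρ (Fin.last m)
      (fun k hk => hμ (lt_of_le_of_ne (Fin.le_last k) hk))
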